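/- Theorem 1 (exact support recovery for tree-sparse signals via adaptive sensing): let d ≥ 1 be an integer and let S ⊆ ℕ be a rooted connected subtree of the infinite complete d-ary tree on ℕ with |S| = k ≥ 2. Let α : ℕ → ℝ satisfy α_j = 0 for j ∉ S, and set α_min = min_{j∈S} |α_j| > 0. For every c₁ > 0 and every c₂ ∈ (0,1) there exists c₃ > 0 (depending only on c₁, c₂, d) such that the following holds for every β > 0: if α_min ≥ sqrt(c₃·log k / β²) and τ = c₂·β·α_min, then, letting P be the product measure over the measured set M(S) of standard Gaussians N(0,1) (modeling i.i.d. noise w), one has P({w : {j ∈ M(S) : |β·α_j + w_j| ≥ τ} = S}) ≥ 1 − k^{−c₁}; moreover the total number of measurements is |M(S)| = d·k + 1. -/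

import Mathlib

open MeasureTheory ProbabilityTheory Real

/-- The children of node `i` in the infinite complete `d`-ary tree on `ℕ`:
`children d i = {d·i + j : 1 ≤ j ≤ d}`. -/
def children (d i : ℕ) : Finset ℕ := (Finset.Icc 1 d).image (fun j => d * i + j)

/-- A finite set `S ⊆ ℕ` is a rooted connected subtree of the infinite complete `d`-ary
tree: it is nonempty, contains the root `0`, and is closed under taking parents,
where the parent of `j ≥ 1` is `⌊(j-1)/d⌋`. -/
def IsRootedSubtree (d : ℕ) (S : Finset ℕ) : Prop :=
  S.Nonempty ∧ 0 ∈ S ∧ ∀ j ∈ S, 1 ≤ j → (j - 1) / d ∈ S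

/-- The measured set `M(S) = {0} ∪ ⋃_{i ∈ S} children(i)`. -/
def measuredSet (d : ℕ) (S : Finset ℕ) : Finset ℕ := {0} ∪ S.biUnion (children d)

section Aux

lemma pi_eval_measure {ι : Type*} [Fintype ι] [DecidableEq ι] (μ : Measure ℝ)
    [IsProbabilityMeasure μ] (i : ι) (A : Set ℝ) :
    Measure.pi (fun _ : ι => μ) {w : ι → ℝ | w i ∈ A} = μ A := by
  have h : {w : ι → ℝ | w i ∈ A} = Set.pi Set.univ (Function.update (fun _ => Set.univ) i A) := by
    rw [← Set.eval_preimage]; rfl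
  rw [h, Measure.pi_pi]
  rw [Finset.prod_eq_single i (fun b _ hb => by simp [Function.update_of_ne hb]) (by simp)]
  simp

lemma gauss_tail_Ici {t : ℝ} (ht : 1 ≤ t) :
    gaussianReal 0 1 (Set.Ici t) ≤ ENNReal.ofReal (Real.exp (-t^2/2)) := by
  have ht0 : 0 < t := lt_of_lt_of_le one_pos ht
  rw [gaussianReal_apply_eq_integral 0 one_ne_zero]
  apply ENNReal.ofReal_le_ofReal
  have hg : IntegrableOn (fun x : ℝ => Real.exp (t^2/2) * Real.exp (-t * x)) (Set.Ici t) := by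
    rw [integrableOn_Ici_iff_integrableOn_Ioi]
    exact (exp_neg_integrableOn_Ioi t ht0).const_mul _
  have hmono : ∫ x in Set.Ici t, gaussianPDFReal 0 1 x
      ≤ ∫ x in Set.Ici t, Real.exp (t^2/2) * Real.exp (-t * x) := by
    apply setIntegral_mono_on (integrable_gaussianPDFReal 0 1).integrableOn hg measurableSet_Ici
    intro x hx
    unfold gaussianPDFReal
    rw [← Real.exp_add]
    have h1 : (√(2 * π * ((1:NNReal):ℝ)))⁻¹ ≤ 1 := by
      rw [NNReal.coe_one, mul_one]
      apply inv_le_one_of_one_le₀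
      rw [show (1:ℝ) = √1 by simp]
      apply Real.sqrt_le_sqrt
      nlinarith [Real.pi_gt_three]
    have h2 : Real.exp (-(x - 0)^2 / (2 * ((1:NNReal):ℝ))) ≤ Real.exp (t^2/2 + -t * x) := by
      apply Real.exp_le_exp.2
      push_cast
      nlinarith [sq_nonneg (x - t)]
    calc (√(2 * π * ((1:NNReal):ℝ)))⁻¹ * Real.exp (-(x - 0)^2 / (2 * ((1:NNReal):ℝ)))
        ≤ 1 * Real.exp (t^2/2 + -t * x) :=
          mul_le_mul h1 h2 (Real.exp_nonneg _) one_pos.le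
      _ = Real.exp (t^2/2 + -t * x) := one_mul _
  refine hmono.trans ?_
  rw [setIntegral_congr_set Ioi_ae_eq_Ici.symm, integral_const_mul]
  have hcomp : ∫ x in Set.Ioi t, Real.exp (-t * x) = t⁻¹ * Real.exp (-(t*t)) := by
    have := integral_comp_mul_left_Ioi (fun y : ℝ => Real.exp (-y)) t ht0
    simp only [smul_eq_mul, integral_exp_neg_Ioi] at this
    rw [← this]
    congr 1 with x
    ring_nf
  rw [hcomp, ← mul_assoc, mul_comm (Real.exp (t^2/2)) t⁻¹, mul_assoc, ← Real.exp_add]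
  rw [show t ^ 2 / 2 + -(t * t) = -t^2/2 by ring]
  calc t⁻¹ * Real.exp (-t^2/2) ≤ 1 * Real.exp (-t^2/2) :=
        mul_le_mul_of_nonneg_right (inv_le_one_of_one_le₀ ht) (Real.exp_nonneg _)
    _ = _ := one_mul _

lemma gauss_symm : (gaussianReal 0 1).map (fun x : ℝ => -1 * x) = gaussianReal 0 1 := by
  rw [gaussianReal_map_const_mul (-1 : ℝ)]
  norm_num

lemma gauss_tail_abs {t : ℝ} (ht : 1 ≤ t) :
    gaussianReal 0 1 {x : ℝ | t ≤ |x|} ≤ ENNReal.ofReal (2 * Real.exp (-t^2/2)) := by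
  have hsub : {x : ℝ | t ≤ |x|} ⊆ Set.Iic (-t) ∪ Set.Ici t := by
    intro x hx
    simp only [Set.mem_setOf_eq] at hx
    rcases le_abs.1 hx with h | h
    · exact Or.inr h
    · exact Or.inl (by simp only [Set.mem_Iic]; linarith)
  have hneg : gaussianReal 0 1 (Set.Iic (-t)) = gaussianReal 0 1 (Set.Ici t) := by
    conv_lhs => rw [← gauss_symm]
    rw [Measure.map_apply (by fun_prop) measurableSet_Iic]
    congr 1
    ext x
    simp only [Set.mem_preimage, Set.mem_Iic, Set.mem_Ici]
    constructor <;> intro h <;> linarith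
  calc gaussianReal 0 1 {x : ℝ | t ≤ |x|}
      ≤ gaussianReal 0 1 (Set.Iic (-t) ∪ Set.Ici t) := measure_mono hsub
    _ ≤ gaussianReal 0 1 (Set.Iic (-t)) + gaussianReal 0 1 (Set.Ici t) := measure_union_le _ _
    _ = gaussianReal 0 1 (Set.Ici t) + gaussianReal 0 1 (Set.Ici t) := by rw [hneg]
    _ ≤ ENNReal.ofReal (Real.exp (-t^2/2)) + ENNReal.ofReal (Real.exp (-t^2/2)) :=
        add_le_add (gauss_tail_Ici ht) (gauss_tail_Ici ht)
    _ = ENNReal.ofReal (2 * Real.exp (-t^2/2)) := by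
        rw [← ENNReal.ofReal_add (Real.exp_nonneg _) (Real.exp_nonneg _)]; ring_nf

lemma parent_of_mem_children {d i j : ℕ} (hd : 1 ≤ d) (h : j ∈ children d i) :
    1 ≤ j ∧ (j - 1) / d = i := by
  simp only [children, Finset.mem_image, Finset.mem_Icc] at h
  obtain ⟨r, ⟨hr1, hrd⟩, rfl⟩ := h
  refine ⟨by omega, ?_⟩
  have : d * i + r - 1 = (r - 1) + d * i := by omega
  rw [this, Nat.add_mul_div_left _ _ (by omega : 0 < d), Nat.div_eq_of_lt (by omega)]
  omega

lemma card_children {d : ℕ} (i : ℕ) : (children d i).card = d := by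
  rw [children, Finset.card_image_of_injective _ (fun a b h => by omega), Nat.card_Icc]
  omega

lemma card_measuredSet {d : ℕ} (hd : 1 ≤ d) (S : Finset ℕ) :
    (measuredSet d S).card = d * S.card + 1 := by
  rw [measuredSet, Finset.card_union_of_disjoint, Finset.card_singleton,
    Finset.card_biUnion]
  · rw [Finset.sum_congr rfl (fun i _ => card_children i), Finset.sum_const, smul_eq_mul]
    ring
  · intro a _ b _ hab
    simp only [Finset.disjoint_left]
    intro j hja hjb
    exact hab ((parent_of_mem_children hd hja).2 ▸ (parent_of_mem_children hd hjb).2.symm ▸ rfl)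
  · simp only [Finset.disjoint_left, Finset.mem_singleton, Finset.mem_biUnion]
    rintro j rfl ⟨i, _, hji⟩
    exact absurd (parent_of_mem_children hd hji).1 (by omega)

lemma subset_measuredSet {d : ℕ} (hd : 1 ≤ d) {S : Finset ℕ} (hS : IsRootedSubtree d S) :
    S ⊆ measuredSet d S := by
  intro j hj
  rw [measuredSet, Finset.mem_union]
  rcases Nat.eq_zero_or_pos j with rfl | hj1
  · exact Or.inl (Finset.mem_singleton_self 0)
  · refine Or.inr (Finset.mem_biUnion.2 ⟨(j - 1) / d, hS.2.2 j hj hj1, ?_⟩)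
    simp only [children, Finset.mem_image, Finset.mem_Icc]
    refine ⟨j - d * ((j - 1) / d), ⟨?_, ?_⟩, ?_⟩ <;>
    · have h1 := Nat.div_add_mod (j - 1) d
      have h2 := Nat.mod_lt (j - 1) (show 0 < d by omega)
      omega

lemma numeric_bound (d k : ℕ) (hd : 1 ≤ d) (hk2 : 2 ≤ k) (c₁ m : ℝ) (hc₁ : 0 < c₁)
    (hm : 0 < m) (t : ℝ) (ht0 : 0 ≤ t)
    (hc₃ : m^2 * (2 * (1 + c₁ + Real.log (2*((d:ℝ)+1)) / Real.log 2 + 1 / Real.log 2) / m^2)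
      * Real.log k ≤ t^2) :
    1 ≤ t ∧ ((d*k+1 : ℕ):ℝ) * (2 * Real.exp (-t^2/2)) ≤ (k:ℝ)^(-c₁) := by
  have hlog2 : 0 < Real.log 2 := Real.log_pos one_lt_two
  set a := Real.log (2*((d:ℝ)+1)) / Real.log 2 with ha_def
  set L := Real.log k with hL_def
  have hL : Real.log 2 ≤ L := Real.log_le_log two_pos (by exact_mod_cast hk2)
  have ha : 0 ≤ a := by
    have hd1 : (1:ℝ) ≤ (d:ℝ) := by exact_mod_cast hd
    exact div_nonneg (Real.log_nonneg (by nlinarith)) hlog2.le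
  have hsimp : m^2 * (2 * (1+c₁+a+1/Real.log 2)/m^2) = 2*(1+c₁+a+1/Real.log 2) := by
    field_simp
  rw [hsimp] at hc₃
  have key : (1/Real.log 2) * Real.log 2 = 1 := by field_simp
  have hX : 1/Real.log 2 ≤ 1+c₁+a+1/Real.log 2 := by linarith
  have hprod : (1/Real.log 2) * Real.log 2 ≤ (1+c₁+a+1/Real.log 2) * L :=
    mul_le_mul hX hL hlog2.le (by positivity)
  rw [key] at hprod
  have h2t : 2 ≤ t^2 := by nlinarith
  have h1t : 1 ≤ t := by nlinarith
  refine ⟨h1t, ?_⟩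
  have hk0 : (0:ℝ) < k := by positivity
  have hkL : (k:ℝ) = Real.exp L := (Real.exp_log hk0).symm
  rw [Real.rpow_def_of_pos hk0]
  have hlog_ineq : Real.log (2*((d:ℝ)+1)) + 1 ≤ (a + 1/Real.log 2) * L := by
    have h1 : (a + 1/Real.log 2) * Real.log 2 ≤ (a + 1/Real.log 2) * L :=
      mul_le_mul_of_nonneg_left hL (by positivity)
    have h2 : (a + 1/Real.log 2) * Real.log 2 = Real.log (2*((d:ℝ)+1)) + 1 := by
      rw [ha_def]; field_simp
    linarith
  have hcard : ((d*k+1 : ℕ):ℝ) ≤ ((d:ℝ)+1) * Real.exp L := by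
    rw [← hkL]
    push_cast
    have hkc : (2:ℝ) ≤ (k:ℝ) := by exact_mod_cast hk2
    have hdc : (1:ℝ) ≤ (d:ℝ) := by exact_mod_cast hd
    nlinarith
  have hE : 2 * Real.exp (-t^2/2) ≤ 2 * Real.exp (-((1+c₁+a+1/Real.log 2) * L)) := by
    have : -t^2/2 ≤ -((1+c₁+a+1/Real.log 2) * L) := by linarith
    linarith [Real.exp_le_exp.2 this]
  calc ((d*k+1 : ℕ):ℝ) * (2 * Real.exp (-t^2/2))
      ≤ (((d:ℝ)+1) * Real.exp L) * (2 * Real.exp (-((1+c₁+a+1/Real.log 2) * L))) := by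
        apply mul_le_mul hcard hE (by positivity) (by positivity)
    _ = Real.exp (Real.log (2*((d:ℝ)+1)) + L + -((1+c₁+a+1/Real.log 2) * L)) := by
        rw [Real.exp_add, Real.exp_add,
          Real.exp_log (by positivity : (0:ℝ) < 2*((d:ℝ)+1))]
        ring
    _ ≤ Real.exp (L * (-c₁)) := by
        apply Real.exp_le_exp.2
        nlinarith

end Aux

set_option maxHeartbeats 2000000 in
theorem exact_support_recovery_tree_sparse
    (d : ℕ) (hd : 1 ≤ d) (S : Finset ℕ) (hS : IsRootedSubtree d S)
    (k : ℕ) (hk : S.card = k) (hk2 : 2 ≤ k)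
    (α : ℕ → ℝ) (h0 : ∀ j ∉ S, α j = 0)
    (αmin : ℝ) (hαminEq : αmin = S.inf' hS.1 fun j => |α j|) (hαmin : 0 < αmin)
    (c₁ c₂ : ℝ) (hc₁ : 0 < c₁) (hc₂0 : 0 < c₂) (hc₂1 : c₂ < 1) :
    ∃ c₃ : ℝ, 0 < c₃ ∧ ∀ β : ℝ, 0 < β →
      Real.sqrt (c₃ * Real.log k / β ^ 2) ≤ αmin →
      ∀ τ : ℝ, τ = c₂ * β * αmin →
      (Measure.pi fun _ : ↥(measuredSet d S) => gaussianReal 0 1)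
        {w : ↥(measuredSet d S) → ℝ |
          ((measuredSet d S).attach.filter
            fun (j : {x // x ∈ measuredSet d S}) => τ ≤ |β * α (j : ℕ) + w j|).image Subtype.val = S} ≥
        ENNReal.ofReal (1 - (k : ℝ) ^ (-c₁)) ∧
      (measuredSet d S).card = d * k + 1 := by
  have hlog2 : 0 < Real.log 2 := Real.log_pos one_lt_two
  set m := min c₂ (1 - c₂) with hm_def
  have hm : 0 < m := lt_min hc₂0 (by linarith)
  have hmc₂ : m ≤ c₂ := min_le_left _ _
  have hm1c₂ : m ≤ 1 - c₂ := min_le_right _ _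
  set c₃ := 2 * (1 + c₁ + Real.log (2*((d:ℝ)+1)) / Real.log 2 + 1 / Real.log 2) / m^2
    with hc₃_def
  have ha : 0 ≤ Real.log (2*((d:ℝ)+1)) / Real.log 2 := by
    have hd1 : (1:ℝ) ≤ (d:ℝ) := by exact_mod_cast hd
    exact div_nonneg (Real.log_nonneg (by nlinarith)) hlog2.le
  have hc₃ : 0 < c₃ := by
    apply div_pos _ (pow_pos hm 2)
    have : 0 < 1 / Real.log 2 := by positivity
    linarith
  refine ⟨c₃, hc₃, ?_⟩
  intro β hβ hsqrt τ hτ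
  have hlogk : 0 ≤ Real.log k := Real.log_nonneg (by exact_mod_cast hk2.trans' one_le_two)
  -- β * αmin ≥ sqrt (c₃ log k)
  have hβα : Real.sqrt (c₃ * Real.log k) ≤ β * αmin := by
    have h1 : Real.sqrt (c₃ * Real.log k / β ^ 2)
        = Real.sqrt (c₃ * Real.log k) / β := by
      rw [Real.sqrt_div (by positivity), Real.sqrt_sq hβ.le]
    rw [h1, div_le_iff₀ hβ] at hsqrt
    linarith [hsqrt]
  set t₀ := m * (β * αmin) with ht₀_def
  have ht₀0 : 0 ≤ t₀ := by positivity
  have ht₀sq : m^2 * c₃ * Real.log k ≤ t₀^2 := by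
    have hs : Real.sqrt (c₃ * Real.log k) ^ 2 = c₃ * Real.log k :=
      Real.sq_sqrt (by positivity)
    have hsn : 0 ≤ Real.sqrt (c₃ * Real.log k) := Real.sqrt_nonneg _
    have h2 : c₃ * Real.log k ≤ (β*αmin)^2 := by nlinarith
    rw [ht₀_def]
    nlinarith [sq_nonneg m, mul_nonneg hβ.le hαmin.le]
  obtain ⟨h1t, hnum⟩ := numeric_bound d k hd hk2 c₁ m hc₁ hm t₀ ht₀0 (by rw [← hc₃_def]; exact ht₀sq)
  -- the event
  set M := measuredSet d S with hM_def
  have hSM : S ⊆ M := subset_measuredSet hd hS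
  have hα : ∀ j ∈ S, αmin ≤ |α j| := fun j hj => hαminEq ▸ Finset.inf'_le _ hj
  have hgood : ∀ w : ↥M → ℝ, (∀ j : ↥M, |w j| < t₀) →
      (M.attach.filter fun (j : {x // x ∈ M}) => τ ≤ |β * α (j : ℕ) + w j|).image
        Subtype.val = S := by
    intro w hw
    ext x
    simp only [Finset.mem_image, Finset.mem_filter, Finset.mem_attach, true_and]
    constructor
    · rintro ⟨j, hcond, rfl⟩
      by_contra hxS
      rw [h0 _ hxS, mul_zero, zero_add] at hcond
      have := hw j
      have hτt₀ : t₀ ≤ τ := by rw [hτ, ht₀_def]; nlinarith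
      linarith
    · intro hx
      refine ⟨⟨x, hSM hx⟩, ?_, rfl⟩
      have hj := hw ⟨x, hSM hx⟩
      have habs : |β * α x| ≤ |β * α x + w ⟨x, hSM hx⟩| + |w ⟨x, hSM hx⟩| := by
        calc |β * α x| = |(β * α x + w ⟨x, hSM hx⟩) + (-(w ⟨x, hSM hx⟩))| := by ring_nf
          _ ≤ |β * α x + w ⟨x, hSM hx⟩| + |(-(w ⟨x, hSM hx⟩))| := abs_add_le _ _
          _ = |β * α x + w ⟨x, hSM hx⟩| + |w ⟨x, hSM hx⟩| := by rw [abs_neg]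
      have hax : β * αmin ≤ |β * α x| := by
        rw [abs_mul, abs_of_pos hβ]
        exact mul_le_mul_of_nonneg_left (hα x hx) hβ.le
      rw [hτ]
      have ht₀' : t₀ ≤ (1 - c₂) * (β * αmin) := by rw [ht₀_def]; nlinarith
      nlinarith
  set E := {w : ↥M → ℝ |
      (M.attach.filter fun (j : {x // x ∈ M}) => τ ≤ |β * α (j : ℕ) + w j|).image
        Subtype.val = S} with hE_def
  set μ := Measure.pi fun _ : ↥M => gaussianReal 0 1 with hμ_def
  have hEc : Eᶜ ⊆ ⋃ j ∈ M.attach, {w : ↥M → ℝ | t₀ ≤ |w j|} := by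
    intro w hw
    by_contra hnot
    simp only [Set.mem_iUnion, Set.mem_setOf_eq, not_exists, not_le] at hnot
    exact hw (hgood w (fun j => hnot j (Finset.mem_attach _ _)))
  have hcardM : M.card = d * k + 1 := by rw [hM_def, card_measuredSet hd, hk]
  have htail : ∀ j : ↥M, μ {w : ↥M → ℝ | t₀ ≤ |w j|}
      ≤ ENNReal.ofReal (2 * Real.exp (-t₀^2/2)) := by
    intro j
    have : {w : ↥M → ℝ | t₀ ≤ |w j|} = {w : ↥M → ℝ | w j ∈ {x : ℝ | t₀ ≤ |x|}} := rfl
    rw [hμ_def, this, pi_eval_measure]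
    exact gauss_tail_abs h1t
  have hEcle : μ Eᶜ ≤ ENNReal.ofReal ((k:ℝ)^(-c₁)) := by
    calc μ Eᶜ ≤ μ (⋃ j ∈ M.attach, {w : ↥M → ℝ | t₀ ≤ |w j|}) := measure_mono hEc
      _ ≤ ∑ j ∈ M.attach, μ {w : ↥M → ℝ | t₀ ≤ |w j|} := measure_biUnion_finset_le _ _
      _ ≤ ∑ j ∈ M.attach, ENNReal.ofReal (2 * Real.exp (-t₀^2/2)) :=
          Finset.sum_le_sum (fun j _ => htail j)
      _ = (M.card : ENNReal) * ENNReal.ofReal (2 * Real.exp (-t₀^2/2)) := by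
          rw [Finset.sum_const, Finset.card_attach, nsmul_eq_mul]
      _ = ENNReal.ofReal (((d*k+1 : ℕ):ℝ) * (2 * Real.exp (-t₀^2/2))) := by
          rw [hcardM, ← ENNReal.ofReal_natCast (d*k+1), ← ENNReal.ofReal_mul (by positivity)]
      _ ≤ ENNReal.ofReal ((k:ℝ)^(-c₁)) := ENNReal.ofReal_le_ofReal hnum
  constructor
  · have hunion : (1:ENNReal) ≤ μ E + ENNReal.ofReal ((k:ℝ)^(-c₁)) := by
      calc (1:ENNReal) = μ Set.univ := measure_univ.symm
        _ = μ (E ∪ Eᶜ) := by rw [Set.union_compl_self]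
        _ ≤ μ E + μ Eᶜ := measure_union_le _ _
        _ ≤ μ E + ENNReal.ofReal ((k:ℝ)^(-c₁)) := add_le_add_right hEcle _
    rw [ge_iff_le, ENNReal.ofReal_sub _ (Real.rpow_nonneg (by positivity) _)]
    rw [tsub_le_iff_right, ENNReal.ofReal_one]
    exact hunion
  · rw [card_measuredSet hd, hk]
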